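/- arXiv:2511.19354 — 2 statements merged into one kernel-verified Lean document; each statement's English description precedes it below -/
import Mathlib

section
/- Let w ∈ βℕ and let f : ℕ → βℕ be injective with discrete range (as a subspace of βℕ) such that f(i) ≅ w for every i ∈ ℕ. Then for every v ∈ βℕ, f̃(v) ≅ v ⊗ w (an isomorphism between an ultrafilter on ℕ and an ultrafilter on ℕ × ℕ). -/
section Aux
open Set Function

lemma mem_ubind {α β} {u : Ultrafilter α} {m : α → Ultrafilter β} {s : Set β} :
    s ∈ u.bind m ↔ {x | s ∈ m x} ∈ u := Iff.rfl

lemma extend_eq_bind (f : ℕ → Ultrafilter ℕ) (v : Ultrafilter ℕ) :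
    Ultrafilter.extend f v = v.bind f := by
  rw [ultrafilter_extend_eq_iff, ultrafilter_converges_iff]
  ext s
  rw [mem_ubind]
  change _ ↔ s ∈ joinM (v.map f)
  rw [show joinM (v.map f) = (v.map f).bind id from rfl, mem_ubind]
  exact Iff.rfl

/-- separating sets from discreteness -/
lemma sep_sets (f : ℕ → Ultrafilter ℕ) (hinj : Function.Injective f)
    (hdisc : DiscreteTopology (Set.range f)) (i : ℕ) :
    ∃ A : Set ℕ, A ∈ f i ∧ ∀ j, j ≠ i → A ∉ f j := by
  have hop : IsOpen ({⟨f i, ⟨i, rfl⟩⟩} : Set (Set.range f)) := isOpen_discrete _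
  rw [isOpen_induced_iff] at hop
  obtain ⟨U, hU, hUeq⟩ := hop
  have hfiU : f i ∈ U := by
    have : (⟨f i, ⟨i, rfl⟩⟩ : Set.range f) ∈ (Subtype.val ⁻¹' U : Set (Set.range f)) := by
      rw [hUeq]; rfl
    exact this
  obtain ⟨t, ⟨a, rfl⟩, hat, htU⟩ := ultrafilterBasis_is_basis.exists_subset_of_mem_open hfiU hU
  refine ⟨a, hat, fun j hj haj => ?_⟩
  have : (⟨f j, ⟨j, rfl⟩⟩ : Set.range f) ∈ (Subtype.val ⁻¹' U : Set (Set.range f)) :=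
    htU haj
  rw [hUeq, mem_singleton_iff, Subtype.ext_iff] at this
  exact hj (hinj this)

lemma exists_coinfinite_mem (v : Ultrafilter ℕ) : ∃ V : Set ℕ, V ∈ v ∧ Vᶜ.Infinite := by
  have hev : ({n | Even n} : Set ℕ).Infinite :=
    infinite_of_injective_forall_mem (f := fun k : ℕ => 2 * k)
      (fun a b h => by have : 2 * a = 2 * b := h; omega)
      (fun a => ⟨a, by ring⟩)
  have hod : ({n | Even n}ᶜ : Set ℕ).Infinite :=
    infinite_of_injective_forall_mem (f := fun k : ℕ => 2 * k + 1)
      (fun a b h => by have : 2 * a + 1 = 2 * b + 1 := h; omega)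
      (fun a => by simp only [Set.mem_compl_iff, Set.mem_setOf_eq, Nat.even_iff]; omega)
  by_cases h : {n | Even n} ∈ v
  · exact ⟨_, h, hod⟩
  · exact ⟨_, (Ultrafilter.compl_mem_iff_notMem).2 h, by rwa [compl_compl]⟩

theorem stmt10' (w : Ultrafilter ℕ) (f : ℕ → Ultrafilter ℕ)
    (hinj : Function.Injective f)
    (hdisc : DiscreteTopology (Set.range f))
    (hiso : ∀ i : ℕ, ∃ g : ℕ → ℕ, Function.Bijective g ∧ Ultrafilter.map g w = f i) :
    ∀ v : Ultrafilter ℕ, ∃ h : ℕ × ℕ → ℕ, Function.Bijective h ∧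
      Ultrafilter.map h ((v.bind fun x => w.map fun y => (x, y))) = Ultrafilter.extend f v := by
  classical
  intro v
  choose g hgbij hgmap using hiso
  choose A hAmem hAsep using sep_sets f hinj hdisc
  -- pairwise disjoint sets
  set B : ℕ → Set ℕ := fun i => A i \ ⋃ j ∈ Set.Iio i, A j with hB
  have hBmem : ∀ i, B i ∈ f i := by
    intro i
    have hnot : (⋃ j ∈ Set.Iio i, A j) ∉ f i := by
      rw [Ultrafilter.finite_biUnion_mem_iff (Set.finite_Iio i)]
      rintro ⟨j, hj, hjmem⟩
      exact hAsep j i (by simp at hj; omega) hjmem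
    have hc := Ultrafilter.compl_mem_iff_notMem.2 hnot
    rw [hB]
    simp only [Set.diff_eq]
    exact Filter.inter_mem (hAmem i) hc
  have hBdisj : ∀ i j, i ≠ j → ∀ x, x ∈ B i → x ∈ B j → False := by
    have key : ∀ i j, j < i → ∀ x, x ∈ B i → x ∈ B j → False := by
      intro i j hij x hxi hxj
      exact hxi.2 (mem_biUnion (Set.mem_Iio.2 hij) hxj.1)
    intro i j hij x hxi hxj
    rcases lt_or_gt_of_ne hij with h | h
    · exact key j i h x hxj hxi
    · exact key i j h x hxi hxj
  have hBne : ∀ i, (B i).Nonempty := fun i => Ultrafilter.nonempty_of_mem (hBmem i)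
  obtain ⟨V, hVv, hVc⟩ := exists_coinfinite_mem v
  set S : Set (ℕ × ℕ) := {p | p.1 ∈ V ∧ g p.1 p.2 ∈ B p.1} with hS
  set T : Set ℕ := ⋃ i ∈ V, B i with hT
  -- the partial bijection
  have hmemT : ∀ p : S, g (p.1 : ℕ × ℕ).1 (p.1 : ℕ × ℕ).2 ∈ T := by
    rintro ⟨⟨i, n⟩, hi, hn⟩
    exact mem_biUnion hi hn
  have hebij : Function.Bijective (fun p : S => (⟨g (p.1 : ℕ × ℕ).1 (p.1 : ℕ × ℕ).2, hmemT p⟩ : T)) := by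
    constructor
    · rintro ⟨⟨i, n⟩, hi, hn⟩ ⟨⟨j, m⟩, hj, hm⟩ hp
      simp only [Subtype.mk_eq_mk] at hp
      have hij : i = j := by
        by_contra hne
        exact hBdisj i j hne _ hn (hp ▸ hm)
      subst hij
      have : n = m := (hgbij i).1 hp
      simp [this]
    · rintro ⟨x, hx⟩
      obtain ⟨i, hi, hxB⟩ := mem_iUnion₂.1 hx
      obtain ⟨n, rfl⟩ := (hgbij i).2 x
      exact ⟨⟨(i, n), hi, hxB⟩, rfl⟩
  -- complements are infinite
  have hScount : Countable ↥Sᶜ := (Set.to_countable _).to_subtype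
  have hTcount : Countable ↥Tᶜ := (Set.to_countable _).to_subtype
  obtain ⟨i0, hi0⟩ := hVc.nonempty
  have hScinf : Sᶜ.Infinite := by
    apply infinite_of_injective_forall_mem (f := fun n : ℕ => ((i0, n) : ℕ × ℕ))
    · intro a b h; simpa using h
    · intro n
      simp only [Set.mem_compl_iff, hS, Set.mem_setOf_eq]
      rintro ⟨h1, -⟩
      exact hi0 h1
  have hTcinf : Tᶜ.Infinite := by
    haveI : Infinite ↥Vᶜ := hVc.to_subtype
    apply infinite_of_injective_forall_mem (f := fun i : ↥Vᶜ => (hBne i).choose)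
    · intro a b hab
      by_contra hne
      have h1 : (hBne (a : ℕ)).choose ∈ B (a : ℕ) := (hBne (a : ℕ)).choose_spec
      have h2 : (hBne (a : ℕ)).choose ∈ B (b : ℕ) := by
        have : (hBne (a : ℕ)).choose = (hBne (b : ℕ)).choose := hab
        rw [this]; exact (hBne (b : ℕ)).choose_spec
      exact hBdisj _ _ (fun he => hne (Subtype.ext he)) _ h1 h2
    · intro i
      simp only [Set.mem_compl_iff, hT, mem_iUnion₂]
      rintro ⟨j, hj, hmem⟩
      by_cases hij : (i : ℕ) = j
      · exact i.2 (hij ▸ hj)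
      · exact hBdisj _ _ hij _ (hBne i).choose_spec hmem
  haveI : Infinite ↥Sᶜ := hScinf.to_subtype
  haveI : Infinite ↥Tᶜ := hTcinf.to_subtype
  obtain ⟨ec⟩ : Nonempty (↥Sᶜ ≃ ↥Tᶜ) := nonempty_equiv_of_countable
  set e : S ≃ T := Equiv.ofBijective _ hebij with he
  set h : ℕ × ℕ ≃ ℕ :=
    (Equiv.Set.sumCompl S).symm.trans ((Equiv.sumCongr e ec).trans (Equiv.Set.sumCompl T)) with hh
  have hhS : ∀ p : ℕ × ℕ, p ∈ S → h p = g p.1 p.2 := by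
    intro p hp
    simp only [hh, Equiv.trans_apply, Equiv.Set.sumCompl_symm_apply_of_mem hp,
      Equiv.sumCongr_apply, Sum.map_inl, Equiv.Set.sumCompl_apply_inl]
    rfl
  refine ⟨h, h.bijective, ?_⟩
  rw [extend_eq_bind]
  ext X
  rw [Ultrafilter.mem_map, mem_ubind, mem_ubind]
  have key : ∀ i, i ∈ V → ((⇑h ⁻¹' X ∈ Ultrafilter.map (fun y => (i, y)) w) ↔ X ∈ f i) := by
    intro i hi
    rw [Ultrafilter.mem_map, ← hgmap i, Ultrafilter.mem_map]
    have hW : {n | g i n ∈ B i} ∈ w := by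
      have hb := hBmem i
      rw [← hgmap i, Ultrafilter.mem_map] at hb
      exact hb
    constructor
    · intro hmem
      refine Filter.mem_of_superset (Filter.inter_mem hmem hW) ?_
      rintro n ⟨hn1, hn2⟩
      have : h (i, n) = g i n := hhS (i, n) ⟨hi, hn2⟩
      simpa [this] using hn1
    · intro hmem
      refine Filter.mem_of_superset (Filter.inter_mem hmem hW) ?_
      rintro n ⟨hn1, hn2⟩
      have : h (i, n) = g i n := hhS (i, n) ⟨hi, hn2⟩
      simp only [Set.mem_preimage, Set.mem_setOf_eq] at *
      rwa [this]
  rw [← Ultrafilter.mem_coe, ← Ultrafilter.mem_coe, ← Filter.eventually_iff, ← Filter.eventually_iff]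
  exact Filter.eventually_congr (Filter.eventually_of_mem hVv key)

end Aux


/-- The tensor (Fubini) product of ultrafilters: `S ∈ tensor u v` iff
`{x | {y | (x, y) ∈ S} ∈ v} ∈ u`. -/
def tensor {X Y : Type*} (u : Ultrafilter X) (v : Ultrafilter Y) : Ultrafilter (X × Y) :=
  u.bind fun x => v.map fun y => (x, y)

/-- The Rudin–Keisler preorder: `u ≤_RK v` iff `u` is the image of `v` under some map. -/
def RKLE {X Y : Type*} (u : Ultrafilter X) (v : Ultrafilter Y) : Prop :=
  ∃ f : Y → X, Ultrafilter.map f v = u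

/-- Isomorphism of ultrafilters: image under a bijection. -/
def UIso {X Y : Type*} (u : Ultrafilter X) (v : Ultrafilter Y) : Prop :=
  ∃ f : Y → X, Function.Bijective f ∧ Ultrafilter.map f v = u

/-- An ultrafilter is principal iff it is `pure x` for some point `x`. -/
def IsPrincipal {X : Type*} (u : Ultrafilter X) : Prop := ∃ x, u = pure x

/-- A weak P-point: a nonprincipal ultrafilter on `ℕ` not in the closure of any countable
set of ultrafilters avoiding it and all principal ultrafilters. -/
def WeakPPoint (u : Ultrafilter ℕ) : Prop :=
  ¬ IsPrincipal u ∧ ∀ A : Set (Ultrafilter ℕ), A.Countable → u ∉ A →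
    (∀ x ∈ A, ¬ IsPrincipal x) → u ∉ closure A

/-- A space `Z` is `u`-compact iff every pushforward of `u` to `Z` converges. -/
def UCompact {X : Type*} (u : Ultrafilter X) (Z : Type*) [TopologicalSpace Z] : Prop :=
  ∀ f : X → Z, ∃ z : Z, ↑(Ultrafilter.map f u) ≤ nhds z

/-- The Comfort preorder: `u ≤_C v` iff every `v`-compact space is `u`-compact. -/
def ComfortLE {X Y : Type*} (u : Ultrafilter X) (v : Ultrafilter Y) : Prop :=
  ∀ (Z : Type*) [TopologicalSpace Z], UCompact v Z → UCompact u Z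

theorem stmt10 (w : Ultrafilter ℕ) (f : ℕ → Ultrafilter ℕ)
    (hinj : Function.Injective f)
    (hdisc : DiscreteTopology (Set.range f))
    (hiso : ∀ i : ℕ, UIso (f i) w) :
    ∀ v : Ultrafilter ℕ, UIso (Ultrafilter.extend f v) (tensor v w) := by
  intro v
  exact stmt10' w f hinj hdisc hiso v
end

section
/- Fix a ladder system on ω₁. Let u = (u_α)_{α<ω₁} be a sequence of nonprincipal ultrafilters in βℕ. Let X, Y ⊆ ω₁, let f^X and f^Y be admissible families for the X-modification u^X and the Y-modification u^Y respectively (with respect to the same ladder system), and write v_{X,α} := f̃^X_α(u^X_α) and v_{Y,α} := f̃^Y_α(u^Y_α). Then for all β ≤ α < ω₁, X ⊆ Y implies v_{X,β} ≤_RK v_{Y,α}. -/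
/-- The first uncountable ordinal `ω₁`. -/
noncomputable def omega1 : Ordinal := (Cardinal.aleph 1).ord

/-- A ladder system on `ω₁`: for each nonzero limit `α < ω₁`, a strictly increasing
`ω`-sequence of ordinals cofinal in `α`. -/
def IsLadderSystem (L : Ordinal → ℕ → Ordinal) : Prop :=
  ∀ α : Ordinal, α < omega1 → Order.IsSuccLimit α →
    StrictMono (L α) ∧ (∀ i : ℕ, L α i < α) ∧ ∀ β < α, ∃ i : ℕ, β ≤ L α i

/-- `vSeq u f α = f̃_α(u_α)`. -/
noncomputable def vSeq (u : Ordinal → Ultrafilter ℕ) (f : Ordinal → ℕ → Ultrafilter ℕ)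
    (α : Ordinal) : Ultrafilter ℕ :=
  Ultrafilter.extend (f α) (u α)

/-- `(f_α)_{α<ω₁}` is admissible for `u = (u_α)_{α<ω₁}` (w.r.t. the ladder system `L`):
writing `v_α := f̃_α(u_α)`, the map `f_0` is injective with principal values; at a successor
`β+1`, `f_{β+1}` is injective with discrete range and all values isomorphic to `v_β`; at a
nonzero limit `α`, `f_α` is injective with discrete range and `f_α(i) ≅ v_{α_i}`. -/
def Admissible (L : Ordinal → ℕ → Ordinal) (u : Ordinal → Ultrafilter ℕ)
    (f : Ordinal → ℕ → Ultrafilter ℕ) : Prop :=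
  (Function.Injective (f 0) ∧ ∀ i : ℕ, IsPrincipal (f 0 i)) ∧
  (∀ β : Ordinal, β + 1 < omega1 →
    Function.Injective (f (β + 1)) ∧ DiscreteTopology (Set.range (f (β + 1))) ∧
    ∀ i : ℕ, UIso (f (β + 1) i) (vSeq u f β)) ∧
  ∀ α : Ordinal, α < omega1 → Order.IsSuccLimit α →
    Function.Injective (f α) ∧ DiscreteTopology (Set.range (f α)) ∧
    ∀ i : ℕ, UIso (f α i) (vSeq u f (L α i))

open Classical in
/-- The `X`-modification of `u`: keep `u_α` for `α ∈ X ∪ Lim(ω₁)` and replace the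
remaining values by the principal ultrafilter `pure 0`. -/
noncomputable def modif (u : Ordinal → Ultrafilter ℕ) (X : Set Ordinal)
    (α : Ordinal) : Ultrafilter ℕ :=
  if α ∈ X ∨ (Order.IsSuccLimit α ∧ α < omega1) then u α else pure 0


lemma mem_bind' {α β} {f : Ultrafilter α} {m : α → Ultrafilter β} {s : Set β} :
    s ∈ f.bind m ↔ {x | s ∈ m x} ∈ f := Iff.rfl

lemma bind_eq_joinM {α β} (u : Ultrafilter α) (f : α → Ultrafilter β) :
    u.bind f = joinM (Ultrafilter.map f u) := by
  ext s
  rw [mem_bind']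
  change _ ↔ s ∈ Ultrafilter.bind (Ultrafilter.map f u) id
  rw [mem_bind', Ultrafilter.mem_map]
  rfl

lemma extend_eq_bind_s12 {α} (u : Ultrafilter α) (f : α → Ultrafilter α) :
    Ultrafilter.extend f u = u.bind f := by
  rw [ultrafilter_extend_eq_iff, ultrafilter_converges_iff, bind_eq_joinM]

lemma rkle_refl {X : Type*} (u : Ultrafilter X) : ∃ f : X → X, Ultrafilter.map f u = u :=
  ⟨id, by ext s; simp [Ultrafilter.mem_map]⟩

lemma rkle_trans {X Y Z : Type*} {u : Ultrafilter X} {v : Ultrafilter Y} {w : Ultrafilter Z}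
    (h1 : ∃ f : Y → X, Ultrafilter.map f v = u) (h2 : ∃ f : Z → Y, Ultrafilter.map f w = v) :
    ∃ f : Z → X, Ultrafilter.map f w = u := by
  obtain ⟨f, hf⟩ := h1; obtain ⟨g, hg⟩ := h2
  exact ⟨f ∘ g, by rw [← Ultrafilter.map_map, hg, hf]⟩

lemma rkle_pure {X Y : Type*} [Nonempty Y] {u : Ultrafilter X} {x : X} :
    ∀ (v : Ultrafilter Y), u = pure x → ∃ f : Y → X, Ultrafilter.map f v = u := by
  intro v h
  refine ⟨fun _ => x, ?_⟩
  ext s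
  by_cases hx : x ∈ s <;> simp [Ultrafilter.mem_map, h, hx]
  exact Filter.univ_mem

-- from a bijection u = map f v, get v = map g u
lemma rkle_of_uiso_rev {X Y : Type*} {u : Ultrafilter X} {v : Ultrafilter Y}
    (h : ∃ f : Y → X, Function.Bijective f ∧ Ultrafilter.map f v = u) :
    ∃ g : X → Y, Ultrafilter.map g u = v := by
  obtain ⟨f, hbij, hmap⟩ := h
  have : Nonempty Y := Filter.nonempty_of_neBot (v : Filter Y)
  refine ⟨Function.invFun f, ?_⟩
  rw [← hmap, Ultrafilter.map_map]
  have : Function.invFun f ∘ f = id := funext fun y => Function.leftInverse_invFun hbij.1 y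
  rw [this]
  ext s; simp [Ultrafilter.mem_map]

lemma bind_const {α β : Type*} (w : Ultrafilter α) (t : Ultrafilter β) :
    (w.bind fun _ => t) = t := by
  ext s
  rw [mem_bind']
  by_cases h : s ∈ t
  · simp only [h, Set.setOf_true]
    simp only [eq_true h, iff_true]
    exact Filter.univ_mem
  · simp only [h, Set.setOf_false, iff_false, eq_false h]
    exact fun hc => Ultrafilter.empty_notMem hc

lemma exists_disjoint_mem (f : ℕ → Ultrafilter ℕ) (hinj : Function.Injective f)
    (hd : DiscreteTopology (Set.range f)) :
    ∃ C : ℕ → Set ℕ, (∀ i j, i ≠ j → C i ∩ C j = ∅) ∧ ∀ i, C i ∈ f i := by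
  -- first, separating sets
  have hA : ∀ i : ℕ, ∃ A : Set ℕ, A ∈ f i ∧ ∀ j, j ≠ i → A ∉ f j := by
    intro i
    have hopen : IsOpen ({⟨f i, Set.mem_range_self i⟩} : Set (Set.range f)) :=
      isOpen_discrete _
    rw [isOpen_induced_iff] at hopen
    obtain ⟨U, hU, hUeq⟩ := hopen
    have hmem : f i ∈ U := by
      have : (⟨f i, Set.mem_range_self i⟩ : Set.range f) ∈ (Subtype.val ⁻¹' U) := by
        rw [hUeq]; rfl
      exact this
    obtain ⟨v, hvB, hv1, hv2⟩ := ultrafilterBasis_is_basis.exists_subset_of_mem_open hmem hU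
    obtain ⟨A, rfl⟩ := hvB
    refine ⟨A, hv1, ?_⟩
    intro j hj hAj
    have : (⟨f j, Set.mem_range_self j⟩ : Set.range f) ∈ (Subtype.val ⁻¹' U) :=
      hv2 hAj
    rw [hUeq, Set.mem_singleton_iff, Subtype.mk_eq_mk] at this
    exact hj (hinj this)
  choose A hA1 hA2 using hA
  refine ⟨fun i => A i ∩ ⋂ j ∈ Finset.range i, (A j)ᶜ, ?_, ?_⟩
  · intro i j hij
    ext n
    simp only [Set.mem_inter_iff, Set.mem_iInter, Set.mem_compl_iff, Finset.mem_range,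
      Set.mem_empty_iff_false, iff_false]
    rintro ⟨⟨hni, hi⟩, ⟨hnj, hj⟩⟩
    rcases hij.lt_or_gt with h | h
    · exact hj i h hni
    · exact hi j h hnj
  · intro i
    refine Filter.inter_mem (hA1 i) ?_
    refine (Filter.biInter_finset_mem _).mpr ?_
    intro j hj
    rw [Finset.mem_range] at hj
    exact Ultrafilter.compl_mem_iff_notMem.mpr (hA2 j i hj.ne')

lemma rkle_bind_bind (w : Ultrafilter ℕ) (g f : ℕ → Ultrafilter ℕ)
    (hinj : Function.Injective f) (hd : DiscreteTopology (Set.range f))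
    (S : Set ℕ) (hS : S ∈ w)
    (h : ∀ i ∈ S, ∃ k : ℕ → ℕ, Ultrafilter.map k (f i) = g i) :
    ∃ k : ℕ → ℕ, Ultrafilter.map k (w.bind f) = w.bind g := by
  obtain ⟨C, hCdisj, hCmem⟩ := exists_disjoint_mem f hinj hd
  -- choose maps
  have hK : ∀ i : ℕ, ∃ k : ℕ → ℕ, i ∈ S → Ultrafilter.map k (f i) = g i := by
    intro i
    by_cases hi : i ∈ S
    · obtain ⟨k, hk⟩ := h i hi
      exact ⟨k, fun _ => hk⟩
    · exact ⟨id, fun hc => absurd hc hi⟩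
  choose K hKmap using hK
  classical
  refine ⟨fun n => if hn : ∃ i, n ∈ C i then K hn.choose n else 0, ?_⟩
  set k : ℕ → ℕ := fun n => if hn : ∃ i, n ∈ C i then K hn.choose n else 0 with hk
  -- k agrees with K i on C i
  have hagree : ∀ i : ℕ, ∀ n ∈ C i, k n = K i n := by
    intro i n hn
    have hex : ∃ j, n ∈ C j := ⟨i, hn⟩
    have : hex.choose = i := by
      by_contra hne
      have := hCdisj hex.choose i hne
      have : n ∈ C hex.choose ∩ C i := ⟨hex.choose_spec, hn⟩
      rw [hCdisj hex.choose i hne] at this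
      exact this
    simp only [hk, dif_pos hex, this]
  ext B
  rw [Ultrafilter.mem_map, mem_bind', mem_bind']
  -- {i | k ⁻¹' B ∈ f i} agrees with {i | B ∈ g i} on S
  have hiff : ∀ i ∈ S, (k ⁻¹' B ∈ f i ↔ B ∈ g i) := by
    intro i hi
    have h1 : k ⁻¹' B ∩ C i = K i ⁻¹' B ∩ C i := by
      ext n
      simp only [Set.mem_inter_iff, Set.mem_preimage]
      constructor
      · rintro ⟨hb, hc⟩; rw [hagree i n hc] at hb; exact ⟨hb, hc⟩
      · rintro ⟨hb, hc⟩; rw [← hagree i n hc] at hb; exact ⟨hb, hc⟩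
    have h2 : K i ⁻¹' B ∈ f i ↔ B ∈ g i := by
      rw [← hKmap i hi, Ultrafilter.mem_map]
    constructor
    · intro hb
      have : k ⁻¹' B ∩ C i ∈ f i := Filter.inter_mem hb (hCmem i)
      rw [h1] at this
      exact h2.mp (Filter.mem_of_superset this Set.inter_subset_left)
    · intro hb
      have : K i ⁻¹' B ∩ C i ∈ f i := Filter.inter_mem (h2.mpr hb) (hCmem i)
      rw [← h1] at this
      exact Filter.mem_of_superset this Set.inter_subset_left
  constructor
  · intro hb
    have : S ∩ {i | k ⁻¹' B ∈ f i} ∈ w := Filter.inter_mem hS hb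
    refine Filter.mem_of_superset this ?_
    rintro i ⟨hiS, hif⟩
    exact (hiff i hiS).mp hif
  · intro hb
    have : S ∩ {i | B ∈ g i} ∈ w := Filter.inter_mem hS hb
    refine Filter.mem_of_superset this ?_
    rintro i ⟨hiS, hif⟩
    exact (hiff i hiS).mpr hif

lemma rkle_target_bind (w : Ultrafilter ℕ) (f : ℕ → Ultrafilter ℕ) (t : Ultrafilter ℕ)
    (hinj : Function.Injective f) (hd : DiscreteTopology (Set.range f))
    (S : Set ℕ) (hS : S ∈ w)
    (h : ∀ i ∈ S, ∃ k : ℕ → ℕ, Ultrafilter.map k (f i) = t) :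
    ∃ k : ℕ → ℕ, Ultrafilter.map k (w.bind f) = t := by
  obtain ⟨k, hk⟩ := rkle_bind_bind w (fun _ => t) f hinj hd S hS h
  exact ⟨k, by rw [hk, bind_const]⟩

lemma pure_bind' (x : ℕ) (f : ℕ → Ultrafilter ℕ) :
    (pure x : Ultrafilter ℕ).bind f = f x := by
  ext s
  rw [mem_bind']
  exact Ultrafilter.mem_pure


lemma modif_limit (u : Ordinal → Ultrafilter ℕ) (X : Set Ordinal) {α : Ordinal}
    (h : Order.IsSuccLimit α) (hα : α < omega1) : modif u X α = u α := by
  rw [modif, if_pos (Or.inr ⟨h, hα⟩)]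

lemma modif_mem (u : Ordinal → Ultrafilter ℕ) (X : Set Ordinal) {α : Ordinal}
    (h : α ∈ X) : modif u X α = u α := by
  rw [modif, if_pos (Or.inl h)]

lemma modif_not (u : Ordinal → Ultrafilter ℕ) (X : Set Ordinal) {α : Ordinal}
    (h1 : α ∉ X) (h2 : ¬ Order.IsSuccLimit α) : modif u X α = pure 0 := by
  rw [modif, if_neg]
  rintro (h | ⟨h, -⟩)
  · exact h1 h
  · exact h2 h

theorem stmt12 (L : Ordinal → ℕ → Ordinal) (hL : IsLadderSystem L)
    (u : Ordinal → Ultrafilter ℕ)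
    (hu : ∀ α : Ordinal, α < omega1 → ¬ IsPrincipal (u α))
    (X Y : Set Ordinal) (fX fY : Ordinal → ℕ → Ultrafilter ℕ)
    (hfX : Admissible L (modif u X) fX) (hfY : Admissible L (modif u Y) fY) :
    ∀ β α : Ordinal, β ≤ α → α < omega1 → X ⊆ Y →
      RKLE (vSeq (modif u X) fX β) (vSeq (modif u Y) fY α) := by
  intro β α hβα hα hXY
  have hbX : ∀ δ : Ordinal, vSeq (modif u X) fX δ = (modif u X δ).bind (fX δ) :=
    fun δ => extend_eq_bind_s12 _ _
  have hbY : ∀ δ : Ordinal, vSeq (modif u Y) fY δ = (modif u Y δ).bind (fY δ) :=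
    fun δ => extend_eq_bind_s12 _ _
  revert β
  induction α using Ordinal.induction with
  | h α IH =>
  intro β hβα
  rcases Ordinal.zero_or_succ_or_isSuccLimit α with rfl | ⟨γ, rfl⟩ | hlim
  · -- α = 0
    have hβ0 : β = 0 := nonpos_iff_eq_zero.mp hβα
    subst hβ0
    obtain ⟨hinjX0, hprinX0⟩ := hfX.1
    obtain ⟨hinjY0, hprinY0⟩ := hfY.1
    choose hX hXeq using hprinX0
    choose hY hYeq using hprinY0
    have hXform : (modif u X 0).bind (fX 0) = Ultrafilter.map hX (modif u X 0) := by
      ext s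
      rw [mem_bind', Ultrafilter.mem_map]
      have : {i | s ∈ fX 0 i} = hX ⁻¹' s := by
        ext i; simp [hXeq i]
      rw [this]
    have hYform : (modif u Y 0).bind (fY 0) = Ultrafilter.map hY (modif u Y 0) := by
      ext s
      rw [mem_bind', Ultrafilter.mem_map]
      have : {i | s ∈ fY 0 i} = hY ⁻¹' s := by
        ext i; simp [hYeq i]
      rw [this]
    rw [RKLE, hbX, hbY, hXform, hYform]
    by_cases h0X : (0 : Ordinal) ∈ X
    · have h0Y : (0 : Ordinal) ∈ Y := hXY h0X
      rw [modif_mem u X h0X, modif_mem u Y h0Y]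
      have hinjhY : Function.Injective hY := by
        intro i j hij
        apply hinjY0
        rw [hYeq i, hYeq j, hij]
      refine ⟨hX ∘ Function.invFun hY, ?_⟩
      rw [Ultrafilter.map_map]
      congr 1
      ext i
      simp [Function.comp, Function.leftInverse_invFun hinjhY i]
    · rw [modif_not u X h0X Ordinal.not_isSuccLimit_zero]
      have : Ultrafilter.map hX (pure 0) = pure (hX 0) := by
        ext s; simp [Ultrafilter.mem_map]
      rw [this]
      exact rkle_pure _ rfl
  · -- α = succ γ
    rw [← Ordinal.add_one_eq_succ] at hβα hα IH ⊢
    have hγ1 : γ < γ + 1 := by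
      rw [Ordinal.add_one_eq_succ]; exact Order.lt_succ γ
    have hγω : γ < omega1 := hγ1.trans hα
    obtain ⟨hinjY, hdY, hisoY⟩ := hfY.2.1 γ hα
    obtain ⟨hinjX, hdX, hisoX⟩ := hfX.2.1 γ hα
    -- step : vY γ ≤RK vY (γ+1)
    have step1 : RKLE (vSeq (modif u Y) fY γ) (vSeq (modif u Y) fY (γ + 1)) := by
      rw [RKLE, hbY (γ + 1)]
      exact rkle_target_bind _ _ _ hinjY hdY Set.univ Filter.univ_mem
        (fun i _ => rkle_of_uiso_rev (hisoY i))
    rcases lt_or_eq_of_le hβα with hβlt | hβeq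
    · -- β ≤ γ
      have hβγ : β ≤ γ := by
        rw [Ordinal.add_one_eq_succ] at hβlt
        exact Order.lt_succ_iff.mp hβlt
      exact rkle_trans (IH γ hγ1 hγω β hβγ) step1
    · -- β = γ + 1
      subst hβeq
      have chainX : ∀ i : ℕ, RKLE (fX (γ + 1) i) (vSeq (modif u Y) fY γ) := by
        intro i
        obtain ⟨g, hgbij, hgmap⟩ := hisoX i
        exact rkle_trans ⟨g, hgmap⟩ (IH γ hγ1 hγω γ le_rfl)
      by_cases hmemX : γ + 1 ∈ X
      · have hmemY : γ + 1 ∈ Y := hXY hmemX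
        rw [RKLE, hbX, hbY, modif_mem u X hmemX, modif_mem u Y hmemY]
        refine rkle_bind_bind _ _ _ hinjY hdY Set.univ Filter.univ_mem ?_
        intro i _
        exact rkle_trans (chainX i) (rkle_of_uiso_rev (hisoY i))
      · have hns : ¬ Order.IsSuccLimit (γ + 1) := by
          rw [Ordinal.add_one_eq_succ]; exact Order.not_isSuccLimit_succ γ
        rw [RKLE, hbX, modif_not u X hmemX hns, pure_bind']
        exact rkle_trans (chainX 0) step1
  · -- α limit
    obtain ⟨hmono, hlt, hcof⟩ := hL α hα hlim
    obtain ⟨hinjY, hdY, hisoY⟩ := hfY.2.2 α hα hlim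
    obtain ⟨hinjX, hdX, hisoX⟩ := hfX.2.2 α hα hlim
    have hwY : modif u Y α = u α := modif_limit u Y hlim hα
    rcases lt_or_eq_of_le hβα with hβlt | hβeq
    · -- β < α : use cofinality
      obtain ⟨i, hi⟩ := hcof β hβlt
      have hSmem : {j : ℕ | i ≤ j} ∈ u α := by
        by_contra hc
        rw [← Ultrafilter.compl_mem_iff_notMem] at hc
        have hfin : ({j : ℕ | i ≤ j}ᶜ : Set ℕ).Finite := by
          have : ({j : ℕ | i ≤ j}ᶜ : Set ℕ) = Set.Iio i := by
            ext j; simp [Set.mem_compl_iff, not_le]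
          rw [this]; exact Set.finite_Iio i
        obtain ⟨x, _, hpx⟩ := Ultrafilter.eq_pure_of_finite_mem hfin hc
        exact hu α hα ⟨x, hpx⟩
      rw [RKLE, hbY, hwY]
      refine rkle_target_bind _ _ _ hinjY hdY {j : ℕ | i ≤ j} hSmem ?_
      intro j hj
      have hβj : β ≤ L α j := hi.trans (hmono.monotone hj)
      exact rkle_trans (IH (L α j) (hlt j) ((hlt j).trans hα) β hβj)
        (rkle_of_uiso_rev (hisoY j))
    · -- β = α
      subst hβeq
      have hwX : modif u X β = u β := modif_limit u X hlim hα
      rw [RKLE, hbX, hbY, hwX, hwY]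
      refine rkle_bind_bind _ _ _ hinjY hdY Set.univ Filter.univ_mem ?_
      intro i _
      obtain ⟨g, hgbij, hgmap⟩ := hisoX i
      exact rkle_trans (rkle_trans ⟨g, hgmap⟩
        (IH (L β i) (hlt i) ((hlt i).trans hα) (L β i) le_rfl))
        (rkle_of_uiso_rev (hisoY i))
end
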